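/- Let R be a commutative ring, and let a : Fin η_a → ℕ × R and b : Fin η_b → ℕ × R be tuple lists whose coordinate maps are each injective, representing vectors x and y (x i equals the value paired with coordinate i in a, or 0 if i does not appear; similarly for y). Let z : List (ℕ × R) be any permutation of the concatenation of the tuples of a and b such that z.map Prod.fst is sorted in nondecreasing order, and let N = η_a + η_b be its length. Then ∑_{k=0}^{N−2} (if (z.get k).1 = (z.get (k+1)).1 then (z.get k).2 · (z.get (k+1)).2 else 0) = ∑_i x i · y i, where the right-hand sum ranges over any finite set of indices containing all coordinates appearing in a and b. -/

import Mathlib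

section Aux

variable {R : Type*} [CommRing R]

/-- product indicator for equal coordinates -/
def svφ (p q : ℕ × R) : R := if p.1 = q.1 then p.2 * q.2 else 0

lemma svφ_comm (p q : ℕ × R) : svφ p q = svφ q p := by
  unfold svφ
  rcases eq_or_ne p.1 q.1 with h | h
  · simp [h, mul_comm]
  · simp [h, h.symm]

/-- sum of svφ over unordered pairs of positions -/
def svg : List (ℕ × R) → R
  | [] => 0
  | p :: l => (l.map (svφ p)).sum + svg l

lemma svg_perm {l₁ l₂ : List (ℕ × R)} (h : l₁.Perm l₂) : svg l₁ = svg l₂ := by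
  induction h with
  | nil => rfl
  | cons p h ih => simp [svg, ih, ((h.map (svφ p)).sum_eq)]
  | swap p q l =>
    simp only [svg, List.map_cons, List.sum_cons]
    rw [svφ_comm]; ring
  | trans _ _ ih₁ ih₂ => rw [ih₁, ih₂]

lemma svg_append (l₁ l₂ : List (ℕ × R)) :
    svg (l₁ ++ l₂) = svg l₁ + svg l₂ + (l₁.map (fun p => (l₂.map (svφ p)).sum)).sum := by
  induction l₁ with
  | nil => simp [svg]
  | cons p l ih =>
    have h1 : (List.map (svφ p) (l ++ l₂)).sum
        = (List.map (svφ p) l).sum + (List.map (svφ p) l₂).sum := by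
      rw [List.map_append, List.sum_append]
    simp only [List.cons_append, List.append_eq, svg, List.map_cons, List.sum_cons, ih, h1]
    ring

lemma svg_nodup (l : List (ℕ × R)) (h : (l.map Prod.fst).Nodup) : svg l = 0 := by
  induction l with
  | nil => rfl
  | cons p l ih =>
    simp only [List.map_cons, List.nodup_cons] at h
    have h1 : (l.map (svφ p)).sum = 0 := by
      apply List.sum_eq_zero
      intro r hr
      simp only [List.mem_map] at hr
      obtain ⟨q, hq, rfl⟩ := hr
      have : p.1 ≠ q.1 := fun he => h.1 (he ▸ List.mem_map_of_mem (f := Prod.fst) hq)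
      simp [svφ, this]
    simp [svg, h1, ih h.2]

/-- sum of svφ over adjacent pairs -/
def svadj : List (ℕ × R) → R
  | [] => 0
  | [_] => 0
  | p :: q :: l => svφ p q + svadj (q :: l)

lemma svadj_eq_sum (l : List (ℕ × R)) :
    ∑ k ∈ Finset.range (l.length - 1),
      svφ (l.getD k (0, 0)) (l.getD (k + 1) (0, 0)) = svadj l := by
  induction l with
  | nil => rfl
  | cons p l ih =>
    cases l with
    | nil => rfl
    | cons q l' =>
      have hlen : (p :: q :: l').length - 1 = (q :: l').length - 1 + 1 := by
        simp
      rw [hlen, Finset.sum_range_succ']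
      simp only [List.getD_cons_succ, List.getD_cons_zero]
      simp only [List.getD_cons_succ] at ih
      rw [ih]
      simp [svadj, add_comm]

lemma svg_eq_svadj (l : List (ℕ × R)) (hs : (l.map Prod.fst).Pairwise (· ≤ ·))
    (hc : ∀ i, (l.map Prod.fst).count i ≤ 2) : svg l = svadj l := by
  induction l with
  | nil => rfl
  | cons p l ih =>
    simp only [List.map_cons, List.pairwise_cons] at hs
    have htail : svg l = svadj l := by
      apply ih hs.2
      intro i
      have h2 := hc i
      have h3 : (l.map Prod.fst).count i ≤ ((p :: l).map Prod.fst).count i := by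
        simp only [List.map_cons, List.count_cons]
        split <;> omega
      omega
    cases l with
    | nil => simp [svg, svadj]
    | cons q l' =>
      have hhead : ((q :: l').map (svφ p)).sum = svφ p q := by
        simp only [List.map_cons, List.sum_cons]
        have hz : (l'.map (svφ p)).sum = 0 := by
          apply List.sum_eq_zero
          intro r hr
          simp only [List.mem_map] at hr
          obtain ⟨s, hsl, rfl⟩ := hr
          have hne : p.1 ≠ s.1 := by
            intro he
            have hpq : p.1 ≤ q.1 := hs.1 _ (by simp)
            have hs2 := hs.2
            rw [List.map_cons, List.pairwise_cons] at hs2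
            have hqs : q.1 ≤ s.1 := hs2.1 _ (List.mem_map_of_mem (f := Prod.fst) hsl)
            have hqp : q.1 = p.1 := le_antisymm (he ▸ hqs) hpq
            have hmem : p.1 ∈ l'.map Prod.fst :=
              he ▸ List.mem_map_of_mem (f := Prod.fst) hsl
            have hcnt : 1 ≤ (l'.map Prod.fst).count p.1 := by
              have := List.count_pos_iff.mpr hmem
              omega
            have h2 := hc p.1
            simp [List.count_cons, hqp] at h2
            omega
          simp [svφ, hne]
        simp [hz]
      rw [show svg (p :: q :: l') = ((q :: l').map (svφ p)).sum + svg (q :: l') from rfl,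
        hhead, htail]
      rfl

end Aux

theorem sparse_vector_mult_algorithm_correct {R : Type*} [CommRing R]
    {ηa ηb : ℕ} (a : Fin ηa → ℕ × R) (b : Fin ηb → ℕ × R)
    (ha : Function.Injective (fun j => (a j).1))
    (hb : Function.Injective (fun k => (b k).1))
    (x y : ℕ → R)
    (hx : ∀ i, x i = ∑ j ∈ Finset.univ.filter (fun j => (a j).1 = i), (a j).2)
    (hy : ∀ i, y i = ∑ k ∈ Finset.univ.filter (fun k => (b k).1 = i), (b k).2)
    (z : List (ℕ × R)) (hperm : z.Perm (List.ofFn a ++ List.ofFn b))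
    (hsorted : (z.map Prod.fst).Pairwise (· ≤ ·))
    (I : Finset ℕ) (hIa : ∀ j, (a j).1 ∈ I) (hIb : ∀ k, (b k).1 ∈ I) :
    ∑ k ∈ Finset.range (ηa + ηb - 1),
        (if (z.getD k (0, 0)).1 = (z.getD (k + 1) (0, 0)).1
         then (z.getD k (0, 0)).2 * (z.getD (k + 1) (0, 0)).2 else 0)
      = ∑ i ∈ I, x i * y i := by
  have hlen : z.length = ηa + ηb := by
    rw [hperm.length_eq]; simp
  have hna : ((List.ofFn a).map Prod.fst).Nodup := by
    rw [List.map_ofFn]; exact List.nodup_ofFn.mpr ha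
  have hnb : ((List.ofFn b).map Prod.fst).Nodup := by
    rw [List.map_ofFn]; exact List.nodup_ofFn.mpr hb
  have hcount : ∀ i, (z.map Prod.fst).count i ≤ 2 := by
    intro i
    rw [(hperm.map Prod.fst).count_eq]
    rw [List.map_append, List.count_append]
    have c1 := List.nodup_iff_count_le_one.mp hna i
    have c2 := List.nodup_iff_count_le_one.mp hnb i
    omega
  have key : ∑ k ∈ Finset.range (ηa + ηb - 1),
        (if (z.getD k (0, 0)).1 = (z.getD (k + 1) (0, 0)).1
         then (z.getD k (0, 0)).2 * (z.getD (k + 1) (0, 0)).2 else 0) = svg z := by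
    rw [svg_eq_svadj z hsorted hcount, ← svadj_eq_sum, ← hlen]
    rfl
  rw [key, svg_perm hperm, svg_append, svg_nodup _ hna, svg_nodup _ hnb]
  simp only [zero_add, List.map_ofFn, List.sum_ofFn, Function.comp]
  -- goal: ∑ j, ∑ k, svφ (a j) (b k) = ∑ i ∈ I, x i * y i
  have hxy : ∀ i ∈ I, x i * y i = ∑ j, ∑ k, (if (a j).1 = i ∧ (b k).1 = i
      then (a j).2 * (b k).2 else 0) := by
    intro i _
    rw [hx, hy, Finset.sum_mul_sum, Finset.sum_filter]
    refine Finset.sum_congr rfl fun j _ => ?_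
    rcases eq_or_ne (a j).1 i with hji | hji
    · simp [hji, Finset.sum_filter]
    · simp [hji]
  rw [Finset.sum_congr rfl hxy]
  conv_rhs => rw [Finset.sum_comm]
  refine Finset.sum_congr rfl fun j _ => ?_
  conv_rhs => rw [Finset.sum_comm]
  refine Finset.sum_congr rfl fun k _ => ?_
  rcases eq_or_ne (a j).1 (b k).1 with hjk | hjk
  · rw [show (∑ i ∈ I, if (a j).1 = i ∧ (b k).1 = i then (a j).2 * (b k).2 else 0)
        = ∑ i ∈ I, if (a j).1 = i then (a j).2 * (b k).2 else 0 from
      Finset.sum_congr rfl fun i _ => by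
        rcases eq_or_ne (a j).1 i with h | h <;> simp [h, ← hjk]]
    rw [Finset.sum_ite_eq I (a j).1 (fun _ => (a j).2 * (b k).2)]
    simp [svφ, hjk, hjk ▸ hIa j]
  · have hz : ∀ i ∈ I, (if (a j).1 = i ∧ (b k).1 = i then (a j).2 * (b k).2 else 0) = 0 := by
      intro i _
      have : ¬((a j).1 = i ∧ (b k).1 = i) := by rintro ⟨rfl, h2⟩; exact hjk h2.symm
      simp [this]
    rw [Finset.sum_congr rfl hz]
    simp [svφ, hjk]
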